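/- Let A ∈ {ℤ, ℝ} and let X ⊆ ℝ^d be a bounded set whose convex hull is full-dimensional (its affine hull is all of ℝ^d). Then every A-X-free convex body K ⊆ ℝ^d is contained in a full-dimensional A-X-free convex body, i.e. there exists a convex body K' ⊇ K that is A-X-free and whose affine hull is all of ℝ^d. -/

import Mathlib

open Set Pointwise MeasureTheory Metric

noncomputable section

/-- The set of real numbers that are integers (the ring ℤ viewed inside ℝ). -/
def ZSet : Set ℝ := Set.range (fun z : ℤ => (z : ℝ))

/-- `T : ℝ^d → ℝ^d` is an affine `A`-unimodular transformation: `T x = M x + b` with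
`M` an integer matrix of determinant `±1` and `b ∈ A^d`. -/
def IsUnimodularMap {d : ℕ} (A : Set ℝ) (T : (Fin d → ℝ) → (Fin d → ℝ)) : Prop :=
  ∃ (M : Matrix (Fin d) (Fin d) ℤ) (b : Fin d → ℝ),
    (M.det = 1 ∨ M.det = -1) ∧ (∀ i, b i ∈ A) ∧
    ∀ x, T x = (M.map (fun z : ℤ => (z : ℝ))).mulVec x + b

/-- `Y` is an `A`-unimodular copy of `X`. -/
def IsUnimodCopy {d : ℕ} (A : Set ℝ) (X Y : Set (Fin d → ℝ)) : Prop :=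
  ∃ T, IsUnimodularMap A T ∧ Y = T '' X

/-- `K` contains an `A`-unimodular copy of `X`. -/
def ContainsCopy {d : ℕ} (A : Set ℝ) (X K : Set (Fin d → ℝ)) : Prop :=
  ∃ Y, IsUnimodCopy A X Y ∧ Y ⊆ K

/-- `K` is `A`-`X`-free: its relative interior contains no `A`-unimodular copy of `X`. -/
def IsFree {d : ℕ} (A : Set ℝ) (X K : Set (Fin d → ℝ)) : Prop :=
  ∀ Y, IsUnimodCopy A X Y → ¬ Y ⊆ intrinsicInterior ℝ K

/-- A convex body: a nonempty compact convex set. -/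
def IsConvexBody {d : ℕ} (K : Set (Fin d → ℝ)) : Prop :=
  Convex ℝ K ∧ IsCompact K ∧ K.Nonempty

/-- A polytope: the convex hull of a finite set of points. -/
def IsPolytope {d : ℕ} (K : Set (Fin d → ℝ)) : Prop :=
  ∃ F : Set (Fin d → ℝ), F.Finite ∧ K = convexHull ℝ F

/-- The width of `K` along the integer linear functional `u`. -/
def widthAlong {d : ℕ} (u : Fin d → ℤ) (K : Set (Fin d → ℝ)) : ℝ :=
  sSup {w | ∃ x ∈ K, ∃ y ∈ K, w = |(∑ i, (u i : ℝ) * x i) - ∑ i, (u i : ℝ) * y i|}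

/-- The lattice width of `K`: the infimum of its widths along nonzero integer functionals. -/
def latticeWidth {d : ℕ} (K : Set (Fin d → ℝ)) : ℝ :=
  sInf {w | ∃ u : Fin d → ℤ, u ≠ 0 ∧ w = widthAlong u K}

/-- The generalised flatness constant `Flt_d^A(X)`: the supremum of the lattice widths of all
convex bodies containing no `A`-unimodular copy of `X`. -/
def Flt (d : ℕ) (A : Set ℝ) (X : Set (Fin d → ℝ)) : ℝ :=
  sSup {w | ∃ K : Set (Fin d → ℝ), IsConvexBody K ∧ ¬ ContainsCopy A X K ∧ w = latticeWidth K}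

/-- The affine dimension of a set: the dimension of the direction of its affine span. -/
def affDim {d : ℕ} (s : Set (Fin d → ℝ)) : ℕ :=
  Module.finrank ℝ (affineSpan ℝ s).direction

/-- Minkowski difference `K ÷ S = {x | S + x ⊆ K}`. -/
def mDiff {d : ℕ} (K S : Set (Fin d → ℝ)) : Set (Fin d → ℝ) :=
  {x | ∀ s ∈ S, s + x ∈ K}

/-- The standard triangle `Δ₂ = conv{(0,0), (1,0), (0,1)} ⊆ ℝ²`. -/
def stdSimplex2 : Set (Fin 2 → ℝ) := convexHull ℝ {![0, 0], ![1, 0], ![0, 1]}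

/-- volume of image of a set under a unimodular affine map equals volume of the set. -/
lemma vol_unimod_image {d : ℕ} (A : Set ℝ) (T : (Fin d → ℝ) → (Fin d → ℝ))
    (hT : IsUnimodularMap A T) (s : Set (Fin d → ℝ)) :
    volume (T '' s) = volume s := by
  obtain ⟨M, b, hdet, -, hTx⟩ := hT
  have hTeq : T = (fun y => b + y) ∘ (Matrix.toLin' (M.map (fun z : ℤ => (z : ℝ)))) := by
    funext x
    simp [hTx x, Matrix.toLin'_apply, add_comm]
  rw [hTeq, Set.image_comp]
  have h1 : (fun y => b + y) '' ((Matrix.toLin' (M.map (fun z : ℤ => (z : ℝ)))) '' s)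
      = b +ᵥ ((Matrix.toLin' (M.map (fun z : ℤ => (z : ℝ)))) '' s) := rfl
  rw [h1, measure_vadd]
  rw [Measure.addHaar_image_linearMap]
  have hd : LinearMap.det (Matrix.toLin' (M.map (fun z : ℤ => (z : ℝ))))
      = ((M.det : ℤ) : ℝ) := by
    rw [LinearMap.det_toLin']
    exact ((Int.castRingHom ℝ).map_det M).symm
  rw [hd]
  rcases hdet with h | h <;> simp [h]

/-- If the convex hull of the bounded set `X` is full-dimensional, every `A`-`X`-free convex
body is contained in a full-dimensional `A`-`X`-free convex body. -/
theorem exists_fullDim_free_convexBody (d : ℕ) (A : Set ℝ) (hA : A = ZSet ∨ A = Set.univ)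
    (X : Set (Fin d → ℝ)) (hXbd : Bornology.IsBounded X)
    (hXfull : affineSpan ℝ (convexHull ℝ X) = ⊤)
    (K : Set (Fin d → ℝ)) (hK : IsConvexBody K) (hfree : IsFree A X K) :
    ∃ K' : Set (Fin d → ℝ), IsConvexBody K' ∧ K ⊆ K' ∧ IsFree A X K' ∧
      affineSpan ℝ K' = ⊤ := by
  obtain ⟨hKc, hKcp, hKne⟩ := hK
  by_cases hfd : affineSpan ℝ K = ⊤
  · exact ⟨K, ⟨hKc, hKcp, hKne⟩, subset_rfl, hfree, hfd⟩
  have hXc : Convex ℝ (convexHull ℝ X) := convex_convexHull ℝ X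
  have hint : (interior (convexHull ℝ X)).Nonempty := by
    rw [hXc.interior_nonempty_iff_affineSpan_eq_top]; exact hXfull
  have hv0 : 0 < volume (interior (convexHull ℝ X)) :=
    isOpen_interior.measure_pos volume hint
  have hK0 : volume K = 0 := by
    refine measure_mono_null (subset_affineSpan ℝ K) ?_
    exact Measure.addHaar_affineSubspace volume _ hfd
  have htend := tendsto_measure_cthickening_of_isCompact (μ := volume) hKcp
  rw [hK0] at htend
  have hev : ∀ᶠ r in nhdsWithin (0:ℝ) (Set.Ioi 0),
      volume (cthickening r K) < volume (interior (convexHull ℝ X)) :=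
    (htend.mono_left nhdsWithin_le_nhds).eventually_lt_const hv0
  obtain ⟨ε, hlt, hε⟩ := (hev.and eventually_mem_nhdsWithin).exists
  rw [Set.mem_Ioi] at hε
  refine ⟨cthickening ε K, ⟨hKc.cthickening ε, ?_, hKne.mono (self_subset_cthickening K)⟩,
    self_subset_cthickening K, ?_, ?_⟩
  · exact isCompact_of_isClosed_isBounded isClosed_cthickening hKcp.isBounded.cthickening
  · -- freeness
    rintro Y ⟨T, hT, rfl⟩ hsub
    have hYK : T '' X ⊆ cthickening ε K :=
      hsub.trans intrinsicInterior_subset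
    have hconv : convexHull ℝ (T '' X) ⊆ cthickening ε K :=
      convexHull_min hYK (hKc.cthickening ε)
    -- build the affine map
    obtain ⟨M, b, hdet, hbA, hTx⟩ := hT
    set L := Matrix.toLin' (M.map (fun z : ℤ => (z : ℝ))) with hL
    have hTaff : ∃ f : (Fin d → ℝ) →ᵃ[ℝ] (Fin d → ℝ), ∀ x, f x = T x := by
      refine ⟨⟨T, L, ?_⟩, fun x => rfl⟩
      intro p' p
      simp only [hTx, vadd_eq_add, hL, Matrix.toLin'_apply]
      rw [Matrix.mulVec_add]
      ring_nf
    obtain ⟨f, hf⟩ := hTaff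
    have himg : T '' (convexHull ℝ X) = convexHull ℝ (T '' X) := by
      have h := f.image_convexHull X
      rwa [show ⇑f = T from funext hf] at h
    have hsubKX : T '' (interior (convexHull ℝ X)) ⊆ cthickening ε K := by
      refine (Set.image_mono (f := T) interior_subset).trans ?_
      rw [himg]; exact hconv
    have hvol : volume (T '' (interior (convexHull ℝ X)))
        = volume (interior (convexHull ℝ X)) :=
      vol_unimod_image A T ⟨M, b, hdet, hbA, hTx⟩ _
    have hle : volume (T '' (interior (convexHull ℝ X))) ≤ volume (cthickening ε K) :=
      measure_mono hsubKX
    rw [hvol] at hle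
    exact absurd (lt_of_le_of_lt hle hlt) (lt_irrefl _)
  · -- full dimensional
    obtain ⟨x, hx⟩ := hKne
    have hball : closedBall x ε ⊆ cthickening ε K := closedBall_subset_cthickening hx ε
    have hio : (interior (cthickening ε K)).Nonempty :=
      ⟨x, interior_mono hball (mem_interior_iff_mem_nhds.mpr (closedBall_mem_nhds x hε))⟩
    rw [← (hKc.cthickening ε).interior_nonempty_iff_affineSpan_eq_top]
    exact hio
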